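/- For n ≥ 3, the QE constant of the graph K_{2,n}^2 (the complete bipartite graph K_{2,n} with 2 disjoint edges removed) equals (n − 8 + √(5n² − 24n + 32))/(n + 2). -/

import Mathlib

/-- The almost complete bipartite graph `K_{m,n}^t`: the complete bipartite graph on
parts `Fin m` and `Fin n`, with the `t` disjoint edges `{u_i, v_i}`, `i < t`, removed. -/
def Kmnt (m n t : ℕ) : SimpleGraph (Fin m ⊕ Fin n) :=
  SimpleGraph.fromRel (fun x y =>
    match x, y with
    | Sum.inl i, Sum.inr j => ¬((i : ℕ) = (j : ℕ) ∧ (i : ℕ) < t)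
    | _, _ => False)

open Sum SimpleGraph

variable {n : ℕ}

lemma adj_inl_inr {i : Fin 2} {j : Fin n} :
    (Kmnt 2 n 2).Adj (inl i) (inr j) ↔ (i : ℕ) ≠ (j : ℕ) := by
  simp only [Kmnt, SimpleGraph.fromRel_adj]
  constructor
  · rintro ⟨-, h | h⟩
    · intro he; exact h ⟨he, i.isLt⟩
    · exact absurd h (by simp)
  · intro h
    exact ⟨by simp, Or.inl (fun hc => h hc.1)⟩

lemma adj_inr_inl {i : Fin 2} {j : Fin n} :
    (Kmnt 2 n 2).Adj (inr j) (inl i) ↔ (i : ℕ) ≠ (j : ℕ) := by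
  rw [SimpleGraph.adj_comm]; exact adj_inl_inr

lemma not_adj_inl_inl {i j : Fin 2} : ¬ (Kmnt 2 n 2).Adj (inl i) (inl j) := by
  simp [Kmnt, SimpleGraph.fromRel_adj]

lemma not_adj_inr_inr {i j : Fin n} : ¬ (Kmnt 2 n 2).Adj (inr i) (inr j) := by
  simp [Kmnt, SimpleGraph.fromRel_adj]

lemma walk_lb {V : Type*} {G : SimpleGraph V} (g : V → ℕ)
    (hlip : ∀ u v, G.Adj u v → g v ≤ g u + 1) {x y : V} (p : G.Walk x y) :
    g y ≤ p.length + g x := by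
  induction p with
  | nil => simp
  | cons h q ih =>
    rename_i u v w
    have := hlip u v h
    simp only [SimpleGraph.Walk.length_cons]
    omega

lemma dist_eq_of_potential {V : Type*} {G : SimpleGraph V} (g : V → ℕ)
    (hlip : ∀ u v, G.Adj u v → g v ≤ g u + 1) {x y : V}
    (hx : g x = 0) (p : G.Walk x y) (hlen : p.length = g y) :
    G.dist x y = g y := by
  refine le_antisymm (hlen ▸ SimpleGraph.dist_le p) ?_
  obtain ⟨q, hq⟩ := (SimpleGraph.Walk.reachable p).exists_walk_length_eq_dist
  have := walk_lb g hlip q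
  omega

section dists
variable (hn : 3 ≤ n)

lemma dist_inl_inl (i i' : Fin 2) (hii : i ≠ i') (hn : 3 ≤ n) :
    (Kmnt 2 n 2).dist (inl i) (inl i') = 2 := by
  have h2 : (2 : ℕ) < n := by omega
  set g : Fin 2 ⊕ Fin n → ℕ := Sum.elim (fun k => if k = i then 0 else 2) (fun _ => 1) with hg
  have hlip : ∀ u v, (Kmnt 2 n 2).Adj u v → g v ≤ g u + 1 := by
    rintro (a | m) (a' | m') h
    · exact absurd h not_adj_inl_inl
    · simp only [hg, Sum.elim_inl, Sum.elim_inr]; split <;> omega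
    · simp only [hg, Sum.elim_inl, Sum.elim_inr]; split <;> omega
    · exact absurd h not_adj_inr_inr
  have hv2 : ((⟨2, h2⟩ : Fin n) : ℕ) = 2 := rfl
  have ha1 : (Kmnt 2 n 2).Adj (inl i) (inr ⟨2, h2⟩) := adj_inl_inr.mpr (by rw [hv2]; omega)
  have ha2 : (Kmnt 2 n 2).Adj (inr ⟨2, h2⟩) (inl i') := adj_inr_inl.mpr (by rw [hv2]; omega)
  have := dist_eq_of_potential g hlip (x := inl i) (y := inl i')
    (by simp [hg]) (Walk.cons ha1 (Walk.cons ha2 Walk.nil)) (by simp [hg, hii.symm])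
  simpa [hg, hii.symm] using this

lemma dist_inl_inr_ne (i : Fin 2) (j : Fin n) (hij : (i : ℕ) ≠ (j : ℕ)) :
    (Kmnt 2 n 2).dist (inl i) (inr j) = 1 :=
  SimpleGraph.dist_eq_one_iff_adj.mpr (adj_inl_inr.mpr hij)

lemma dist_inl_inr_eq (i : Fin 2) (j : Fin n) (hij : (i : ℕ) = (j : ℕ)) (hn : 3 ≤ n) :
    (Kmnt 2 n 2).dist (inl i) (inr j) = 3 := by
  have h2 : (2 : ℕ) < n := by omega
  set g : Fin 2 ⊕ Fin n → ℕ :=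
    Sum.elim (fun k => if k = i then 0 else 2)
      (fun m => if (m : ℕ) = (i : ℕ) then 3 else 1) with hg
  have hlip : ∀ u v, (Kmnt 2 n 2).Adj u v → g v ≤ g u + 1 := by
    rintro (a | m) (a' | m') h
    · exact absurd h not_adj_inl_inl
    · have hne := adj_inl_inr.mp h
      simp only [hg, Sum.elim_inl, Sum.elim_inr]
      rcases eq_or_ne a i with ha | ha
      · have : ¬ ((m' : ℕ) = (i : ℕ)) := by rw [← ha]; omega
        simp only [if_pos ha, if_neg this]; omega
      · simp only [if_neg ha]; split <;> omega
    · have hne := adj_inr_inl.mp h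
      simp only [hg, Sum.elim_inl, Sum.elim_inr]
      rcases eq_or_ne a' i with ha | ha
      · have : ¬ ((m : ℕ) = (i : ℕ)) := by rw [← ha]; omega
        simp only [if_pos ha, if_neg this]; omega
      · simp only [if_neg ha]; split <;> omega
    · exact absurd h not_adj_inr_inr
  have hi2 : (i : ℕ) < 2 := i.isLt
  set i' : Fin 2 := ⟨1 - (i : ℕ), by omega⟩ with hi'
  have hv2 : ((⟨2, h2⟩ : Fin n) : ℕ) = 2 := rfl
  have hvi' : ((i' : Fin 2) : ℕ) = 1 - (i : ℕ) := rfl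
  have ha1 : (Kmnt 2 n 2).Adj (inl i) (inr ⟨2, h2⟩) := adj_inl_inr.mpr (by rw [hv2]; omega)
  have ha2 : (Kmnt 2 n 2).Adj (inr ⟨2, h2⟩) (inl i') := adj_inr_inl.mpr (by rw [hv2, hvi']; omega)
  have ha3 : (Kmnt 2 n 2).Adj (inl i') (inr j) := adj_inl_inr.mpr (by rw [hvi']; omega)
  have := dist_eq_of_potential g hlip (x := inl i) (y := inr j)
    (by simp [hg]) (Walk.cons ha1 (Walk.cons ha2 (Walk.cons ha3 Walk.nil)))
    (by simp [hg, hij.symm])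
  simpa [hg, hij.symm] using this

end dists
lemma dist_inr_inr_far (j k : Fin n) (hj : (j : ℕ) < 2) (hk : (k : ℕ) < 2)
    (hjk : j ≠ k) (hn : 3 ≤ n) :
    (Kmnt 2 n 2).dist (inr j) (inr k) = 4 := by
  have h2 : (2 : ℕ) < n := by omega
  have hjkv : (j : ℕ) ≠ (k : ℕ) := fun h => hjk (Fin.ext h)
  set g : Fin 2 ⊕ Fin n → ℕ :=
    Sum.elim (fun a => if (a : ℕ) = (j : ℕ) then 3 else 1)
      (fun m => if (m : ℕ) = (j : ℕ) then 0 else if (m : ℕ) < 2 then 4 else 2) with hg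
  have hlip : ∀ u v, (Kmnt 2 n 2).Adj u v → g v ≤ g u + 1 := by
    rintro (a | m) (a' | m') h
    · exact absurd h not_adj_inl_inl
    · have hne := adj_inl_inr.mp h
      have ha : (a : ℕ) < 2 := a.isLt
      simp only [hg, Sum.elim_inl, Sum.elim_inr]
      split <;> split <;> try split
      all_goals omega
    · have hne := adj_inr_inl.mp h
      have ha : (a' : ℕ) < 2 := a'.isLt
      simp only [hg, Sum.elim_inl, Sum.elim_inr]
      split <;> split <;> try split
      all_goals omega
    · exact absurd h not_adj_inr_inr
  have hva : ∀ (c : ℕ) (hc : c < 2), ((⟨c, hc⟩ : Fin 2) : ℕ) = c := fun _ _ => rfl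
  have hv2 : ((⟨2, h2⟩ : Fin n) : ℕ) = 2 := rfl
  set a1 : Fin 2 := ⟨(k : ℕ), hk⟩ with ha1def
  set a0 : Fin 2 := ⟨(j : ℕ), hj⟩ with ha0def
  have hw1 : (Kmnt 2 n 2).Adj (inr j) (inl a1) := adj_inr_inl.mpr (by rw [hva]; omega)
  have hw2 : (Kmnt 2 n 2).Adj (inl a1) (inr ⟨2, h2⟩) := adj_inl_inr.mpr (by rw [hva, hv2]; omega)
  have hw3 : (Kmnt 2 n 2).Adj (inr ⟨2, h2⟩) (inl a0) := adj_inr_inl.mpr (by rw [hva, hv2]; omega)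
  have hw4 : (Kmnt 2 n 2).Adj (inl a0) (inr k) := adj_inl_inr.mpr (by rw [hva]; omega)
  have hgk : g (inr k) = 4 := by
    simp only [hg, Sum.elim_inr]
    rw [if_neg (by omega), if_pos hk]
  have := dist_eq_of_potential g hlip (x := inr j) (y := inr k)
    (by simp [hg]) (Walk.cons hw1 (Walk.cons hw2 (Walk.cons hw3 (Walk.cons hw4 Walk.nil))))
    (by rw [hgk]; simp)
  rw [this, hgk]

lemma dist_inr_inr_near (j k : Fin n) (hjk : j ≠ k) (hfar : ¬ ((j : ℕ) < 2 ∧ (k : ℕ) < 2)) :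
    (Kmnt 2 n 2).dist (inr j) (inr k) = 2 := by
  have hjkv : (j : ℕ) ≠ (k : ℕ) := fun h => hjk (Fin.ext h)
  set g : Fin 2 ⊕ Fin n → ℕ :=
    Sum.elim (fun a => if (a : ℕ) = (j : ℕ) then 3 else 1)
      (fun m => if m = j then 0 else 2) with hg
  have hlip : ∀ u v, (Kmnt 2 n 2).Adj u v → g v ≤ g u + 1 := by
    rintro (a | m) (a' | m') h
    · exact absurd h not_adj_inl_inl
    · have hne := adj_inl_inr.mp h
      simp only [hg, Sum.elim_inl, Sum.elim_inr]
      have : (m' = j) → ¬ ((a : ℕ) = (j : ℕ)) := by rintro rfl; omega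
      split <;> split <;> omega
    · have hne := adj_inr_inl.mp h
      simp only [hg, Sum.elim_inl, Sum.elim_inr]
      rcases eq_or_ne m j with rfl | hm
      · rw [if_pos rfl, if_neg (by omega)]
      · rw [if_neg hm]; split <;> omega
    · exact absurd h not_adj_inr_inr
  have hva : ∀ (c : ℕ) (hc : c < 2), ((⟨c, hc⟩ : Fin 2) : ℕ) = c := fun _ _ => rfl
  set a : Fin 2 := if (j : ℕ) = 0 ∨ (k : ℕ) = 0 then ⟨1, one_lt_two⟩ else ⟨0, two_pos⟩ with hadef
  have hav : (a : ℕ) ≠ (j : ℕ) ∧ (a : ℕ) ≠ (k : ℕ) := by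
    rw [hadef]
    split
    · rename_i hc
      rw [hva]
      rcases hc with hc | hc <;> omega
    · rename_i hc
      push_neg at hc
      rw [hva]
      omega
  have hw1 : (Kmnt 2 n 2).Adj (inr j) (inl a) := adj_inr_inl.mpr hav.1
  have hw2 : (Kmnt 2 n 2).Adj (inl a) (inr k) := adj_inl_inr.mpr hav.2
  have hgk : g (inr k) = 2 := by
    simp only [hg, Sum.elim_inr]
    rw [if_neg (Ne.symm hjk)]
  have := dist_eq_of_potential g hlip (x := inr j) (y := inr k)
    (by simp [hg]) (Walk.cons hw1 (Walk.cons hw2 Walk.nil))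
    (by rw [hgk]; simp)
  rw [this, hgk]
/-- Closed form of the distance as a real number. -/
noncomputable def dval (n : ℕ) : (Fin 2 ⊕ Fin n) → (Fin 2 ⊕ Fin n) → ℝ
  | inl i, inl i' => if i = i' then 0 else 2
  | inl i, inr j => if (i : ℕ) = (j : ℕ) then 3 else 1
  | inr j, inl i => if (i : ℕ) = (j : ℕ) then 3 else 1
  | inr j, inr k => if j = k then 0 else if (j : ℕ) < 2 ∧ (k : ℕ) < 2 then 4 else 2

lemma dist_cast (hn : 3 ≤ n) (x y : Fin 2 ⊕ Fin n) :
    (((Kmnt 2 n 2).dist x y : ℕ) : ℝ) = dval n x y := by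
  rcases x with i | j <;> rcases y with i' | k
  · rcases eq_or_ne i i' with rfl | h
    · simp [SimpleGraph.dist_self, dval]
    · rw [dist_inl_inl i i' h hn]; simp [dval, h]
  · rcases eq_or_ne (i : ℕ) (k : ℕ) with h | h
    · rw [dist_inl_inr_eq i k h hn]; simp [dval, h]
    · rw [dist_inl_inr_ne i k h]; simp [dval, h]
  · rw [SimpleGraph.dist_comm]
    rcases eq_or_ne (i' : ℕ) (j : ℕ) with h | h
    · rw [dist_inl_inr_eq i' j h hn]; simp [dval, h]
    · rw [dist_inl_inr_ne i' j h]; simp [dval, h]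
  · rcases eq_or_ne j k with rfl | h
    · simp [SimpleGraph.dist_self, dval]
    · by_cases hf : (j : ℕ) < 2 ∧ (k : ℕ) < 2
      · rw [dist_inr_inr_far j k hf.1 hf.2 h hn]; simp [dval, h, hf]
      · rw [dist_inr_inr_near j k h hf]; simp [dval, h, hf]
        intro h1; by_contra h2; exact hf ⟨by omega, by omega⟩

lemma sum_ite_val1 (c : ℕ) (hc : c < n) (u w t : ℝ) (g : Fin n → ℝ) :
    ∑ j : Fin n, (if c = (j : ℕ) then u else w) * t * g j
      = w * t * (∑ j, g j) + (u - w) * t * g ⟨c, hc⟩ := by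
  have h : ∀ j : Fin n, (if c = (j : ℕ) then u else w) * t * g j
      = w * t * g j + (if j = ⟨c, hc⟩ then (u - w) * t * g j else 0) := by
    intro j
    rcases eq_or_ne j ⟨c, hc⟩ with rfl | hj
    · rw [if_pos rfl, if_pos rfl]; ring
    · have : ¬ (c = (j : ℕ)) := fun h => hj (Fin.ext h.symm)
      rw [if_neg this, if_neg hj]; ring
  rw [Finset.sum_congr rfl (fun j _ => h j), Finset.sum_add_distrib,
    Finset.sum_ite_eq' Finset.univ, if_pos (Finset.mem_univ _), ← Finset.mul_sum]

lemma sum_ite_val2 (c : ℕ) (hc : c < n) (u w t : ℝ) (g : Fin n → ℝ) :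
    ∑ j : Fin n, (if c = (j : ℕ) then u else w) * g j * t
      = w * t * (∑ j, g j) + (u - w) * t * g ⟨c, hc⟩ := by
  have h : ∀ j : Fin n, (if c = (j : ℕ) then u else w) * g j * t
      = (if c = (j : ℕ) then u else w) * t * g j := fun j => by ring
  rw [Finset.sum_congr rfl (fun j _ => h j), sum_ite_val1 c hc]
lemma sum_inr_inr (hn : 3 ≤ n) (x : Fin n → ℝ) :
    ∑ j : Fin n, ∑ k : Fin n,
        (if j = k then (0:ℝ) else if (j : ℕ) < 2 ∧ (k : ℕ) < 2 then 4 * x j * x k else 2 * x j * x k)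
      = 2 * (∑ j, x j)^2 - 2 * (∑ j, x j^2)
        + 4 * (x ⟨0, by omega⟩ * x ⟨1, by omega⟩) := by
  have h0 : (0:ℕ) < n := by omega
  have h1 : (1:ℕ) < n := by omega
  set j0 : Fin n := ⟨0, h0⟩ with hj0
  set j1 : Fin n := ⟨1, h1⟩ with hj1
  set X : ℝ := ∑ j, x j with hX
  have hpw : ∀ j k : Fin n,
      (if j = k then (0:ℝ) else if (j : ℕ) < 2 ∧ (k : ℕ) < 2 then 4 * x j * x k else 2 * x j * x k)
      = 2 * X * x j - 2 * X * x j + 2 * x j * x k + (if k = j then (-2) * (x j * x k) else 0)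
        + (if k = j1 then (if j = j0 then 2 * (x j * x k) else 0) else 0)
        + (if k = j0 then (if j = j1 then 2 * (x j * x k) else 0) else 0) := by
    intro j k
    have hv0 : ((j0 : Fin n) : ℕ) = 0 := rfl
    have hv1 : ((j1 : Fin n) : ℕ) = 1 := rfl
    simp only [Fin.ext_iff, hv0, hv1]
    split_ifs <;> first | (exfalso; omega) | ring
  rw [Finset.sum_congr rfl fun j _ => Finset.sum_congr rfl fun k _ => hpw j k]
  have inner : ∀ j : Fin n,
      (∑ k, (2 * X * x j - 2 * X * x j + 2 * x j * x k + (if k = j then (-2) * (x j * x k) else 0)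
        + (if k = j1 then (if j = j0 then 2 * (x j * x k) else 0) else 0)
        + (if k = j0 then (if j = j1 then 2 * (x j * x k) else 0) else 0)))
      = 2 * X * x j + (-2) * x j ^ 2
        + (if j = j0 then 2 * (x j * x j1) else 0)
        + (if j = j1 then 2 * (x j * x j0) else 0) := by
    intro j
    simp only [Finset.sum_add_distrib, Finset.sum_ite_eq' Finset.univ, Finset.mem_univ, if_true]
    rw [show (∑ k : Fin n, (2 * X * x j - 2 * X * x j) : ℝ)
        = ∑ k : Fin n, (0 : ℝ) from Finset.sum_congr rfl fun k _ => by ring,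
      show (∑ k : Fin n, 2 * x j * x k : ℝ) = (2 * x j) * ∑ k, x k from by
        rw [Finset.mul_sum],
      Finset.sum_const, ← hX]
    simp
    ring
  rw [Finset.sum_congr rfl fun j _ => inner j]
  simp only [Finset.sum_add_distrib, Finset.sum_ite_eq' Finset.univ, Finset.mem_univ, if_true]
  have e1 : ∀ j : Fin n, 2 * X * x j = (2 * X) * x j := fun j => by ring
  have e2 : ∀ j : Fin n, (-2 : ℝ) * x j ^ 2 = (-2) * (x j ^ 2) := fun j => rfl
  rw [Finset.sum_congr rfl fun j _ => e1 j, ← Finset.mul_sum, ← hX,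
    ← Finset.mul_sum]
  ring

lemma sum_ite3 (c : ℕ) (hc : c < n) (u v : ℝ) (g : Fin n → ℝ) :
    ∑ j : Fin n, (if c = (j : ℕ) then u * g j else v * g j)
      = v * (∑ j, g j) + (u - v) * g ⟨c, hc⟩ := by
  have h : ∀ j : Fin n, (if c = (j : ℕ) then u * g j else v * g j)
      = v * g j + (if j = ⟨c, hc⟩ then (u - v) * g j else 0) := by
    intro j
    rcases eq_or_ne j ⟨c, hc⟩ with rfl | hj
    · rw [if_pos rfl, if_pos rfl]; ring
    · have : ¬ (c = (j : ℕ)) := fun h => hj (Fin.ext h.symm)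
      rw [if_neg this, if_neg hj]; ring
  rw [Finset.sum_congr rfl (fun j _ => h j), Finset.sum_add_distrib,
    Finset.sum_ite_eq' Finset.univ, if_pos (Finset.mem_univ _), ← Finset.mul_sum]

lemma sum_ite4 (c : ℕ) (hc : c < n) (t : ℝ) (g : Fin n → ℝ) :
    ∑ j : Fin n, (if c = (j : ℕ) then 3 * g j * t else g j * t)
      = (∑ j, g j) * t + 2 * g ⟨c, hc⟩ * t := by
  have h : ∀ j : Fin n, (if c = (j : ℕ) then 3 * g j * t else g j * t)
      = g j * t + (if j = ⟨c, hc⟩ then 2 * g j * t else 0) := by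
    intro j
    rcases eq_or_ne j ⟨c, hc⟩ with rfl | hj
    · rw [if_pos rfl, if_pos rfl]; ring
    · have : ¬ (c = (j : ℕ)) := fun h => hj (Fin.ext h.symm)
      rw [if_neg this, if_neg hj]; ring
  rw [Finset.sum_congr rfl (fun j _ => h j), Finset.sum_add_distrib,
    Finset.sum_ite_eq' Finset.univ, if_pos (Finset.mem_univ _), ← Finset.sum_mul]

lemma quad_eval (hn : 3 ≤ n) (h0 : (0:ℕ) < n) (h1 : (1:ℕ) < n) (f : Fin 2 ⊕ Fin n → ℝ) :
    ∑ x, ∑ y, ((Kmnt 2 n 2).dist x y : ℝ) * f x * f y =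
      4 * f (inl 0) * f (inl 1)
      + 2 * (f (inl 0) + f (inl 1)) * (∑ j, f (inr j))
      + 2 * (∑ j, f (inr j))^2 - 2 * (∑ j, f (inr j)^2)
      + 4 * (f (inl 0) * f (inr ⟨0, h0⟩) + f (inl 1) * f (inr ⟨1, h1⟩)
           + f (inr ⟨0, h0⟩) * f (inr ⟨1, h1⟩)) := by
  rw [Finset.sum_congr rfl fun x _ => Finset.sum_congr rfl fun y _ => by rw [dist_cast hn]]
  rw [Fintype.sum_sum_type]
  simp only [Fintype.sum_sum_type, Fin.sum_univ_two, dval]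
  norm_num
  simp only [Finset.sum_add_distrib]
  simp only [show ∀ x : Fin n, ((x:ℕ) ≤ 1) ↔ ((x:ℕ) < 2) from fun x => by omega]
  rw [sum_ite3 0 h0 (3 * f (inl 0)) (f (inl 0)) (fun j => f (inr j)),
    sum_ite3 1 h1 (3 * f (inl 1)) (f (inl 1)) (fun j => f (inr j)),
    sum_ite4 0 h0 (f (inl 0)) (fun j => f (inr j)),
    sum_ite4 1 h1 (f (inl 1)) (fun j => f (inr j)),
    sum_inr_inr hn (fun j => f (inr j))]
  ring
section algebra
variable {m s : ℝ}

lemma f2_nonneg (hm : 3 ≤ m) (hs0 : 0 ≤ s) (hs2 : s^2 = 5*m^2-24*m+32) :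
    0 ≤ 4*m^2 + 2*m*s - 15*m - s + 4 := by
  have hB : (0:ℝ) < 2*m-1 := by linarith
  have hpoly : s^2*(2*m-1)^2 - (4*m^2-15*m+4)^2 = 4*m^4+4*m^3-28*m^2-32*m+16 := by
    linear_combination ((2*m-1)^2) * hs2
  have hpos : (0:ℝ) ≤ 4*m^4+4*m^3-28*m^2-32*m+16 := by nlinarith [sq_nonneg (m-3), sq_nonneg m, hm]
  have hsB : 0 ≤ s*(2*m-1) := mul_nonneg hs0 hB.le
  nlinarith [sq_nonneg (s*(2*m-1) + (4*m^2-15*m+4)), hpoly, hpos, hsB]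

lemma L1_nonneg (hm : 3 ≤ m) (hs0 : 0 ≤ s) (hs2 : s^2 = 5*m^2-24*m+32) (A P : ℝ) :
    0 ≤ (-2*m^2-8*m+32+2*m*s)*A^2 + (2*m^2-8*m+16+2*m*s)*P^2 + (8*s+24*m-8*m^2)*(A*P) := by
  have hcp : 0 < 2*m^2-8*m+16+2*m*s := by nlinarith [mul_nonneg (by linarith : (0:ℝ) ≤ m) hs0, sq_nonneg (m-2)]
  have hid : (4*(2*m^2-8*m+16+2*m*s)) *
      ((-2*m^2-8*m+32+2*m*s)*A^2 + (2*m^2-8*m+16+2*m*s)*P^2 + (8*s+24*m-8*m^2)*(A*P))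
      = (2*(2*m^2-8*m+16+2*m*s)*P + (8*s+24*m-8*m^2)*A)^2 := by
    linear_combination ((16*m^2-64)*A^2) * hs2
  nlinarith [hid, hcp, sq_nonneg (2*(2*m^2-8*m+16+2*m*s)*P + (8*s+24*m-8*m^2)*A)]

lemma L2_nonneg (hm : 3 ≤ m) (hs0 : 0 ≤ s) (hs2 : s^2 = 5*m^2-24*m+32) (V Q : ℝ) :
    0 ≤ 2*(3*m-4+s)*V^2 + (2*(3*m-4+s)+4*(m+2))*Q^2 - 8*(m+2)*(V*Q) := by
  have hMU : 0 < 3*m-4+s := by linarith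
  have hf2 : 0 ≤ 4*m^2+2*m*s-15*m-s+4 := f2_nonneg hm hs0 hs2
  have hid : (2*(3*m-4+s)) *
      (2*(3*m-4+s)*V^2 + (2*(3*m-4+s)+4*(m+2))*Q^2 - 8*(m+2)*(V*Q))
      = (2*(3*m-4+s)*V - 4*(m+2)*Q)^2 + 16*(4*m^2+2*m*s-15*m-s+4)*Q^2 := by
    linear_combination (4*Q^2) * hs2
  nlinarith [hid, hMU, sq_nonneg (2*(3*m-4+s)*V - 4*(m+2)*Q), mul_nonneg hf2 (sq_nonneg Q)]

lemma key_ineq (hm : 3 ≤ m) (hs0 : 0 ≤ s) (hs2 : s^2 = 5*m^2-24*m+32)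
    (a b x0 x1 T : ℝ) (hT : (a+b+x0+x1)^2 ≤ (m-2)*T) :
    (m+2) * (4*a*b + 4*(a*x0+b*x1+x0*x1) - 2*(x0^2+x1^2) - 2*T)
      ≤ (m-8+s) * (a^2+b^2+x0^2+x1^2+T) := by
  have h1 := L1_nonneg hm hs0 hs2 (a+b) (x0+x1)
  have h2 := L2_nonneg hm hs0 hs2 (a-b) (x0-x1)
  have hMU : 0 < 3*m-4+s := by linarith
  have hprod : 0 ≤ (3*m-4+s) * ((m-2)*T - (a+b+x0+x1)^2) :=
    mul_nonneg hMU.le (by linarith)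
  have hm2 : (0:ℝ) < m - 2 := by linarith
  nlinarith [h1, h2, hprod, hm2, mul_pos hm2 hm2, mul_nonneg hm2.le h2]

lemma bracket_id (hs2 : s^2 = 5*m^2-24*m+32) :
    (m+2) * (4*(m^2-4*m+8+m*s)^2
      + 2*(2*(m^2-4*m+8+m*s))*(2*(2*m^2-6*m-2*s) + (m-2)*(-2*(3*m-4+s)))
      + 2*(2*(2*m^2-6*m-2*s) + (m-2)*(-2*(3*m-4+s)))^2
      - 2*(2*(2*m^2-6*m-2*s)^2 + (m-2)*(-2*(3*m-4+s))^2)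
      + 4*((m^2-4*m+8+m*s)*(2*m^2-6*m-2*s) + (m^2-4*m+8+m*s)*(2*m^2-6*m-2*s)
           + (2*m^2-6*m-2*s)^2))
    = (m-8+s) * (2*(m^2-4*m+8+m*s)^2 + 2*(2*m^2-6*m-2*s)^2 + (m-2)*(-2*(3*m-4+s))^2) := by
  linear_combination (-2*m^3 - 2*m^2*s + 4*m^2 - 4*m*s - 32) * hs2

end algebra
lemma sum_if_lt2 (hn : 3 ≤ n) (β y : ℝ) :
    ∑ j : Fin n, (if (j : ℕ) < 2 then β else y) = 2*β + ((n:ℝ)-2)*y := by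
  have h0 : (0:ℕ) < n := by omega
  have h1 : (1:ℕ) < n := by omega
  have hne : (⟨0, h0⟩ : Fin n) ≠ ⟨1, h1⟩ := by
    intro h; exact absurd (congrArg Fin.val h) (by simp)
  have hpw : ∀ j : Fin n, (if (j : ℕ) < 2 then β else y)
      = y + (if j = ⟨0, h0⟩ then β - y else 0) + (if j = ⟨1, h1⟩ then β - y else 0) := by
    intro j
    by_cases hj0 : j = ⟨0, h0⟩
    · subst hj0; rw [if_pos (by norm_num), if_pos rfl, if_neg hne]; ring
    · by_cases hj1 : j = ⟨1, h1⟩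
      · subst hj1; rw [if_pos (by norm_num), if_neg (Ne.symm hne), if_pos rfl]; ring
      · have : ¬ ((j : ℕ) < 2) := by
          intro h
          have hv0 : (j : ℕ) = 0 ∨ (j : ℕ) = 1 := by omega
          rcases hv0 with h' | h'
          · exact hj0 (Fin.ext h')
          · exact hj1 (Fin.ext h')
        rw [if_neg this, if_neg hj0, if_neg hj1]; ring
  rw [Finset.sum_congr rfl fun j _ => hpw j]
  simp only [Finset.sum_add_distrib, Finset.sum_ite_eq' Finset.univ, Finset.mem_univ, if_true,
    Finset.sum_const, Finset.card_univ, Fintype.card_fin, nsmul_eq_mul]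
  ring
theorem stmt1 (n : ℕ) (hn : 3 ≤ n) :
    IsGreatest {r : ℝ | ∃ f : Fin 2 ⊕ Fin n → ℝ,
        (∑ x, f x ^ 2) = 1 ∧ (∑ x, f x) = 0 ∧
        r = ∑ x, ∑ y, ((Kmnt 2 n 2).dist x y : ℝ) * f x * f y}
      (((n : ℝ) - 8 + Real.sqrt (5 * (n : ℝ) ^ 2 - 24 * n + 32)) / (n + 2)) := by
  have h0 : (0:ℕ) < n := by omega
  have h1 : (1:ℕ) < n := by omega
  have hm : 3 ≤ (n:ℝ) := by exact_mod_cast hn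
  set m : ℝ := (n : ℝ) with hm_def
  have hdisc : (0:ℝ) ≤ 5*m^2 - 24*m + 32 := by nlinarith
  have hsarg : 5 * m ^ 2 - 24 * m + 32 = 5*m^2 - 24*m + 32 := by ring
  set s : ℝ := Real.sqrt (5 * m ^ 2 - 24 * m + 32) with hs_def
  have hs0 : 0 ≤ s := Real.sqrt_nonneg _
  have hs2 : s^2 = 5*m^2 - 24*m + 32 := Real.sq_sqrt hdisc
  have hmp2 : (0:ℝ) < m + 2 := by linarith
  constructor
  · -- membership
    set α : ℝ := m^2 - 4*m + 8 + m*s with hα_def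
    set β : ℝ := 2*m^2 - 6*m - 2*s with hβ_def
    set y : ℝ := -2*(3*m - 4 + s) with hy_def
    set c2 : ℝ := 2*α^2 + 2*β^2 + (m-2)*y^2 with hc2_def
    have hα : 0 < α := by
      rw [hα_def]
      nlinarith [mul_nonneg (by linarith : (0:ℝ) ≤ m) hs0, sq_nonneg (m-2)]
    have hc2 : 0 < c2 := by
      rw [hc2_def]
      nlinarith [sq_nonneg β, sq_nonneg y, hα, sq_nonneg α]
    set t : ℝ := (Real.sqrt c2)⁻¹ with ht_def
    have ht2 : c2 * t^2 = 1 := by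
      rw [ht_def, inv_pow, Real.sq_sqrt hc2.le, mul_inv_cancel₀ hc2.ne']
    refine ⟨fun x : Fin 2 ⊕ Fin n => (Sum.elim (fun _ : Fin 2 => α) (fun j : Fin n => if (j:ℕ) < 2 then β else y) x) * t,
      ?_, ?_, ?_⟩
    · rw [Fintype.sum_sum_type, Fin.sum_univ_two]
      simp only [Sum.elim_inl, Sum.elim_inr, mul_pow]
      rw [← Finset.sum_mul]
      rw [show (∑ j : Fin n, (if (j:ℕ) < 2 then β else y)^2)
          = ∑ j : Fin n, (if (j:ℕ) < 2 then β^2 else y^2) from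
        Finset.sum_congr rfl fun j _ => by split_ifs <;> rfl]
      rw [sum_if_lt2 hn]
      linear_combination ht2
    · rw [Fintype.sum_sum_type, Fin.sum_univ_two]
      simp only [Sum.elim_inl, Sum.elim_inr]
      rw [← Finset.sum_mul, sum_if_lt2 hn]
      rw [hα_def, hβ_def, hy_def]
      ring
    · rw [quad_eval hn h0 h1]
      simp only [Sum.elim_inl, Sum.elim_inr]
      rw [← Finset.sum_mul, sum_if_lt2 hn]
      rw [show (∑ j : Fin n, ((if (j:ℕ) < 2 then β else y) * t)^2)
          = ∑ j : Fin n, (if (j:ℕ) < 2 then β^2 else y^2) * t^2 from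
        Finset.sum_congr rfl fun j _ => by split_ifs <;> ring]
      rw [← Finset.sum_mul, sum_if_lt2 hn]
      rw [show (if ((⟨0, h0⟩ : Fin n) : ℕ) < 2 then β else y) = β from if_pos (by norm_num)]
      rw [show (if ((⟨1, h1⟩ : Fin n) : ℕ) < 2 then β else y) = β from if_pos (by norm_num)]
      rw [div_eq_iff hmp2.ne']
      have ht2' : (2*(m^2-4*m+8+m*s)^2 + 2*(2*m^2-6*m-2*s)^2
          + (m-2)*(-2*(3*m-4+s))^2) * t^2 = 1 := by
        rw [hα_def, hβ_def, hy_def] at hc2_def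
        rw [hc2_def] at ht2
        exact ht2
      rw [hα_def, hβ_def, hy_def]
      linear_combination ((2*m^3 + 2*m^2*s - 4*m^2 + 4*m*s + 32) * t^2) * hs2
        + (-(m-8+s)) * ht2'
  · -- upper bound
    rintro r hr
    simp only [Set.mem_setOf_eq] at hr
    obtain ⟨f, hnorm, hzero, hrval⟩ := hr
    rw [quad_eval hn h0 h1 f] at hrval
    rw [Fintype.sum_sum_type, Fin.sum_univ_two] at hnorm hzero
    set a := f (inl 0) with ha_def
    set b := f (inl 1) with hb_def
    set x0 := f (inr ⟨0, h0⟩) with hx0_def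
    set x1 := f (inr ⟨1, h1⟩) with hx1_def
    set X := ∑ j, f (inr j) with hX_def
    set S := ∑ j, f (inr j)^2 with hS_def
    have hj01 : (⟨0, h0⟩ : Fin n) ≠ ⟨1, h1⟩ := by
      intro h; exact absurd (congrArg Fin.val h) (by simp)
    have hsub : ({⟨0, h0⟩, ⟨1, h1⟩} : Finset (Fin n)) ⊆ Finset.univ := Finset.subset_univ _
    set T := ∑ j ∈ Finset.univ \ {(⟨0, h0⟩ : Fin n), (⟨1, h1⟩ : Fin n)}, f (inr j)^2 with hT_def
    have hpairS : ∑ j ∈ ({(⟨0, h0⟩ : Fin n), (⟨1, h1⟩ : Fin n)} : Finset (Fin n)), f (inr j)^2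
        = x0^2 + x1^2 := by rw [Finset.sum_pair hj01]
    have hpairX : ∑ j ∈ ({(⟨0, h0⟩ : Fin n), (⟨1, h1⟩ : Fin n)} : Finset (Fin n)), f (inr j)
        = x0 + x1 := by rw [Finset.sum_pair hj01]
    have hSsplit : S = x0^2 + x1^2 + T := by
      rw [hS_def, hT_def, ← hpairS, ← Finset.sum_sdiff hsub]; ring
    have hXsplit : ∑ j ∈ Finset.univ \ {(⟨0, h0⟩ : Fin n), (⟨1, h1⟩ : Fin n)}, f (inr j)
        = X - (x0 + x1) := by
      rw [hX_def, ← hpairX, ← Finset.sum_sdiff hsub (f := fun j => f (inr j))]; ring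
    have hcard : ((Finset.univ \ {(⟨0, h0⟩ : Fin n), (⟨1, h1⟩ : Fin n)}).card : ℝ) = m - 2 := by
      rw [Finset.card_sdiff, Finset.inter_eq_left.mpr hsub, Finset.card_univ, Fintype.card_fin, Finset.card_pair hj01]
      rw [hm_def]
      push_cast [Nat.cast_sub (by omega : 2 ≤ n)]
      ring
    have hCS := sq_sum_le_card_mul_sum_sq
      (s := Finset.univ \ {(⟨0, h0⟩ : Fin n), (⟨1, h1⟩ : Fin n)}) (f := fun j => f (inr j))
    rw [hXsplit, hcard, ← hT_def] at hCS
    have hXval : X = -(a + b) := by linarith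
    have hT : (a + b + x0 + x1)^2 ≤ (m - 2) * T := by
      calc (a + b + x0 + x1)^2 = (X - (x0 + x1))^2 := by rw [hXval]; ring
        _ ≤ (m - 2) * T := hCS
    have hkey := key_ineq hm hs0 hs2 a b x0 x1 T hT
    have hone : a^2 + b^2 + x0^2 + x1^2 + T = 1 := by
      rw [← hnorm, hSsplit]; ring
    have hr2 : r = 4*a*b + 4*(a*x0 + b*x1 + x0*x1) - 2*(x0^2 + x1^2) - 2*T := by
      rw [hrval, hXval, hSsplit]; ring
    rw [le_div_iff₀ hmp2, hr2]
    have hfin : (m - 8 + s) * (a^2 + b^2 + x0^2 + x1^2 + T) = m - 8 + s := by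
      rw [hone]; ring
    linarith [hkey, hfin]
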